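/- Let γ_0 > 0 and C > 0. There exists a constant κ > 0, depending only on γ_0 and C, with the following property: for every sequence r : ℤ → ℂ with ∑_{n∈ℤ}(1+|n|)^{γ_0}|r(n)| ≤ C, setting S(ν) = ∑_{l∈ℤ} r(l) e^{−2πi l ν}, one has for all integers L ≥ 1, N ≥ 1 and every ν ∈ [0,1]: |∑_{l=−(L−1)}^{L−1} (1 − |l|/N) r(l) e^{−2πi l ν} − S(ν)| ≤ κ ( 1/L^{γ_0} + L^{(1−γ_0)_+}/N ), where (x)_+ = max(x, 0). -/

import Mathlib

open Complex

/-- uniform bound on the bias of the expected lag-window spectral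
estimator with rectangular window of width `L` built from `N` samples. -/
theorem lag_window_bias_bound (γ₀ C : ℝ) (hγ₀ : 0 < γ₀) (hC : 0 < C) :
    ∃ κ : ℝ, 0 < κ ∧
      ∀ r : ℤ → ℂ,
        Summable (fun n : ℤ => (1 + |(n : ℝ)|) ^ γ₀ * norm (r n)) →
        (∑' n : ℤ, (1 + |(n : ℝ)|) ^ γ₀ * norm (r n)) ≤ C →
        ∀ L N : ℕ, 1 ≤ L → 1 ≤ N → ∀ ν ∈ Set.Icc (0 : ℝ) 1,
          norm
            ((∑ l ∈ Finset.Icc (-(L : ℤ) + 1) ((L : ℤ) - 1),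
                (Complex.ofReal (1 - |(l : ℝ)| / (N : ℝ))) * r l *
                  Complex.exp (-(2 * (Real.pi : ℂ) * Complex.I * (l : ℂ) * (ν : ℂ)))) -
              ∑' l : ℤ, r l *
                Complex.exp (-(2 * (Real.pi : ℂ) * Complex.I * (l : ℂ) * (ν : ℂ))))
            ≤ κ * (1 / (L : ℝ) ^ γ₀ + (L : ℝ) ^ (max (1 - γ₀) 0) / (N : ℝ)) := by
  refine ⟨C, hC, ?_⟩
  intro r hsum hle L N hL hN ν hν
  set m : ℝ := max (1 - γ₀) 0 with hm
  have hm0 : 0 ≤ m := le_max_right _ _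
  have hmγ : 1 ≤ m + γ₀ := by
    rcases le_total (1 - γ₀) 0 with h | h
    · simp [hm, max_eq_right h]; linarith
    · rw [hm, max_eq_left h]; linarith
  set e : ℤ → ℂ := fun l => Complex.exp (-(2 * (Real.pi : ℂ) * Complex.I * (l : ℂ) * (ν : ℂ))) with he
  have habse : ∀ l : ℤ, norm (e l) = 1 := by
    intro l
    have h1 : -(2 * (Real.pi : ℂ) * Complex.I * (l : ℂ) * (ν : ℂ))
        = ((-(2 * Real.pi * (l : ℝ) * ν) : ℝ) : ℂ) * Complex.I := by
      push_cast; ring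
    show norm (Complex.exp (-(2 * (Real.pi : ℂ) * Complex.I * (l : ℂ) * (ν : ℂ)))) = 1
    rw [h1, Complex.norm_exp_ofReal_mul_I]
  set f : ℤ → ℂ := fun l => r l * e l with hf
  have hnormf : ∀ l : ℤ, ‖f l‖ = norm (r l) := by
    intro l
    simp [hf, map_mul, habse l]
  have hweight_nonneg : ∀ l : ℤ, 0 ≤ (1 + |(l : ℝ)|) ^ γ₀ * norm (r l) := by
    intro l
    exact mul_nonneg (Real.rpow_nonneg (by positivity) _) (norm_nonneg _)
  have hone_le : ∀ l : ℤ, (1 : ℝ) ≤ (1 + |(l : ℝ)|) ^ γ₀ := by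
    intro l
    exact Real.one_le_rpow (le_add_of_nonneg_right (abs_nonneg _)) hγ₀.le
  have habs_le : ∀ l : ℤ, norm (r l) ≤ (1 + |(l : ℝ)|) ^ γ₀ * norm (r l) := by
    intro l
    nlinarith [hone_le l, norm_nonneg (r l)]
  have hsumf : Summable f := by
    apply Summable.of_norm
    apply Summable.of_nonneg_of_le (fun l => norm_nonneg _) _ hsum
    intro l
    rw [hnormf l]; exact habs_le l
  set s : Finset ℤ := Finset.Icc (-(L : ℤ) + 1) ((L : ℤ) - 1) with hs
  -- split tsum
  have hsplit := Summable.sum_add_tsum_compl (s := s) hsumf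
  set T : ℂ := ∑' l : ((s : Set ℤ)ᶜ : Set ℤ), f l with hT
  have key : (∑ l ∈ s, (Complex.ofReal (1 - |(l : ℝ)| / (N : ℝ))) * r l * e l) - ∑' l, f l
      = (∑ l ∈ s, ((Complex.ofReal (1 - |(l : ℝ)| / (N : ℝ))) - 1) * f l) - T := by
    rw [← hsplit]
    have h2 : ∀ l ∈ s, ((Complex.ofReal (1 - |(l : ℝ)| / (N : ℝ))) - 1) * f l
        = (Complex.ofReal (1 - |(l : ℝ)| / (N : ℝ))) * r l * e l - f l := by
      intro l _; simp only [hf]; ring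
    rw [Finset.sum_congr rfl h2, Finset.sum_sub_distrib]
    ring
  rw [key]
  have hLpos : (0 : ℝ) < (L : ℝ) := by exact_mod_cast hL
  have hNpos : (0 : ℝ) < (N : ℝ) := by exact_mod_cast hN
  have hLrpow_pos : (0 : ℝ) < (L : ℝ) ^ γ₀ := Real.rpow_pos_of_pos hLpos _
  -- per-term bound inside the window
  have hin : ∀ l ∈ s, |(l : ℝ)| ≤ (L : ℝ) ^ m * (1 + |(l : ℝ)|) ^ γ₀ := by
    intro l hl
    rw [hs, Finset.mem_Icc] at hl
    have habsZ : |l| ≤ (L : ℤ) - 1 := abs_le.mpr ⟨by linarith [hl.1], hl.2⟩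
    have h1L : 1 + |(l : ℝ)| ≤ (L : ℝ) := by
      have h5 : ((|l| : ℤ) : ℝ) ≤ (L : ℝ) - 1 := by exact_mod_cast habsZ
      rw [Int.cast_abs] at h5
      linarith
    have hb1 : (1 : ℝ) ≤ 1 + |(l : ℝ)| := le_add_of_nonneg_right (abs_nonneg _)
    have hb0 : (0 : ℝ) < 1 + |(l : ℝ)| := by linarith
    calc |(l : ℝ)| ≤ 1 + |(l : ℝ)| := by linarith
      _ = (1 + |(l : ℝ)|) ^ (1 : ℝ) := (Real.rpow_one _).symm
      _ ≤ (1 + |(l : ℝ)|) ^ (m + γ₀) := Real.rpow_le_rpow_of_exponent_le hb1 hmγ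
      _ = (1 + |(l : ℝ)|) ^ m * (1 + |(l : ℝ)|) ^ γ₀ := Real.rpow_add hb0 _ _
      _ ≤ (L : ℝ) ^ m * (1 + |(l : ℝ)|) ^ γ₀ := by
          apply mul_le_mul_of_nonneg_right _ (Real.rpow_nonneg hb0.le _)
          exact Real.rpow_le_rpow hb0.le h1L hm0
  -- bound for the finite sum part
  have hsum_s_le : (∑ l ∈ s, (1 + |(l : ℝ)|) ^ γ₀ * norm (r l)) ≤ C := by
    exact le_trans (Summable.sum_le_tsum s (fun l _ => hweight_nonneg l) hsum) hle
  have bound1 : norm (∑ l ∈ s, ((Complex.ofReal (1 - |(l : ℝ)| / (N : ℝ))) - 1) * f l)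
      ≤ C * ((L : ℝ) ^ m / (N : ℝ)) := by
    refine le_trans (norm_sum_le _ _) ?_
    have hterm : ∀ l ∈ s, ‖((Complex.ofReal (1 - |(l : ℝ)| / (N : ℝ))) - 1) * f l‖
        ≤ ((L : ℝ) ^ m / (N : ℝ)) * ((1 + |(l : ℝ)|) ^ γ₀ * norm (r l)) := by
      intro l hl
      rw [norm_mul, hnormf l]
      have he1 : (Complex.ofReal (1 - |(l : ℝ)| / (N : ℝ))) - 1
          = Complex.ofReal (-(|(l : ℝ)| / (N : ℝ))) := by
        push_cast; ring
      rw [he1, Complex.norm_real, Real.norm_eq_abs, abs_neg,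
        _root_.abs_of_nonneg (by positivity : (0:ℝ) ≤ |(l : ℝ)| / (N : ℝ))]
      have h3 : |(l : ℝ)| / (N : ℝ) * norm (r l)
          ≤ ((L : ℝ) ^ m * (1 + |(l : ℝ)|) ^ γ₀ / (N : ℝ)) * norm (r l) := by
        apply mul_le_mul_of_nonneg_right _ (norm_nonneg _)
        gcongr
        exact hin l hl
      refine le_trans h3 (le_of_eq ?_)
      ring
    refine le_trans (Finset.sum_le_sum hterm) ?_
    rw [← Finset.mul_sum]
    calc ((L : ℝ) ^ m / (N : ℝ)) * ∑ l ∈ s, (1 + |(l : ℝ)|) ^ γ₀ * norm (r l)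
        ≤ ((L : ℝ) ^ m / (N : ℝ)) * C := by
          apply mul_le_mul_of_nonneg_left hsum_s_le (by positivity)
      _ = C * ((L : ℝ) ^ m / (N : ℝ)) := mul_comm _ _
  -- bound for the tail
  have hsum_norm_sub : Summable (fun l : ((s : Set ℤ)ᶜ : Set ℤ) => ‖f (l : ℤ)‖) := by
    apply Summable.of_nonneg_of_le (fun l => norm_nonneg _)
      (fun l => by rw [hnormf]; exact habs_le (l : ℤ)) (hsum.subtype _)
  have hsum_w_sub : Summable (fun l : ((s : Set ℤ)ᶜ : Set ℤ) =>
      (1 + |((l : ℤ) : ℝ)|) ^ γ₀ * norm (r (l : ℤ))) := hsum.subtype _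
  have hsplitw := Summable.sum_add_tsum_compl (s := s) hsum
  have hw_compl_le : (∑' l : ((s : Set ℤ)ᶜ : Set ℤ),
      (1 + |((l : ℤ) : ℝ)|) ^ γ₀ * norm (r (l : ℤ))) ≤ C := by
    have h0 : 0 ≤ ∑ l ∈ s, (1 + |(l : ℝ)|) ^ γ₀ * norm (r l) :=
      Finset.sum_nonneg fun l _ => hweight_nonneg l
    linarith [hsplitw, hle]
  have bound2 : norm T ≤ C * (1 / (L : ℝ) ^ γ₀) := by
    rw [hT]
    refine le_trans (norm_tsum_le_tsum_norm hsum_norm_sub) ?_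
    have hterm : ∀ l : ((s : Set ℤ)ᶜ : Set ℤ), ‖f (l : ℤ)‖
        ≤ (1 / (L : ℝ) ^ γ₀) * ((1 + |((l : ℤ) : ℝ)|) ^ γ₀ * norm (r (l : ℤ))) := by
      intro l
      have hls : (l : ℤ) ∉ Finset.Icc (-(L : ℤ) + 1) ((L : ℤ) - 1) := l.2
      rw [Finset.mem_Icc] at hls
      push_neg at hls
      have hLabs : (L : ℤ) ≤ |(l : ℤ)| := by
        rcases le_or_gt (-(L : ℤ) + 1) (l : ℤ) with h | h
        · have := hls h
          calc (L : ℤ) ≤ (l : ℤ) := by linarith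
            _ ≤ |(l : ℤ)| := le_abs_self _
        · calc (L : ℤ) ≤ -(l : ℤ) := by linarith
            _ ≤ |(l : ℤ)| := neg_le_abs _
      have hLreal : (L : ℝ) ≤ 1 + |((l : ℤ) : ℝ)| := by
        have h6 : (L : ℝ) ≤ |((l : ℤ) : ℝ)| := by
          rw [← Int.cast_abs]; exact_mod_cast hLabs
        linarith [h6]
      have hrp : (L : ℝ) ^ γ₀ ≤ (1 + |((l : ℤ) : ℝ)|) ^ γ₀ :=
        Real.rpow_le_rpow hLpos.le hLreal hγ₀.le
      rw [hnormf]
      rw [← sub_nonneg]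
      have : (1 / (L : ℝ) ^ γ₀) * ((1 + |((l : ℤ) : ℝ)|) ^ γ₀ * norm (r (l : ℤ)))
          - norm (r (l : ℤ))
          = (1 / (L : ℝ) ^ γ₀) * (((1 + |((l : ℤ) : ℝ)|) ^ γ₀ - (L : ℝ) ^ γ₀)
              * norm (r (l : ℤ))) := by
        field_simp
      rw [this]
      exact mul_nonneg (by positivity)
        (mul_nonneg (by linarith [hrp]) (norm_nonneg _))
    refine le_trans (Summable.tsum_le_tsum hterm hsum_norm_sub (hsum_w_sub.mul_left _)) ?_
    rw [tsum_mul_left]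
    calc (1 / (L : ℝ) ^ γ₀) * (∑' l : ((s : Set ℤ)ᶜ : Set ℤ),
          (1 + |((l : ℤ) : ℝ)|) ^ γ₀ * norm (r (l : ℤ)))
        ≤ (1 / (L : ℝ) ^ γ₀) * C := by
          apply mul_le_mul_of_nonneg_left hw_compl_le (by positivity)
      _ = C * (1 / (L : ℝ) ^ γ₀) := mul_comm _ _
  calc norm ((∑ l ∈ s, ((Complex.ofReal (1 - |(l : ℝ)| / (N : ℝ))) - 1) * f l) - T)
      ≤ norm (∑ l ∈ s, ((Complex.ofReal (1 - |(l : ℝ)| / (N : ℝ))) - 1) * f l)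
        + norm T := by
        exact norm_sub_le _ _
    _ ≤ C * ((L : ℝ) ^ m / (N : ℝ)) + C * (1 / (L : ℝ) ^ γ₀) := add_le_add bound1 bound2
    _ = C * (1 / (L : ℝ) ^ γ₀ + (L : ℝ) ^ m / (N : ℝ)) := by ring
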